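/- Let $a<b$ be real numbers, $u\in L^2(a,b;\mathbb{C})$, and $\alpha,\beta\in\mathbb{R}$. Then for every $\varepsilon>0$ there exists $M>0$ (depending on $\varepsilon$, $u$, $\alpha$, $\beta$, $a$, $b$) such that for every absolutely continuous function $y:[a,b]\to\mathbb{C}$ whose derivative $y'$ belongs to $L^2(a,b)$: $\Big|\int_a^b u\,y'\,\overline{y}\,dx\Big| + \Big|\int_a^b u\,y\,\overline{y'}\,dx\Big| + |\alpha|\,|y(a)|^2 + |\beta|\,|y(b)|^2 \;\le\; \varepsilon\int_a^b|y'|^2\,dx \;+\; M\int_a^b|y|^2\,dx$. -/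

import Mathlib

open Set ComplexConjugate MeasureTheory

section Helpers
open RealInnerProductSpace

private lemma cs_integral {X : Type*} [MeasurableSpace X] {μ : Measure X} {f g : X → ℝ}
    (hf : MemLp f 2 μ) (hg : MemLp g 2 μ) :
    ∫ x, f x * g x ∂μ ≤ Real.sqrt (∫ x, f x ^ 2 ∂μ) * Real.sqrt (∫ x, g x ^ 2 ∂μ) := by
  set F : Lp ℝ 2 μ := hf.toLp f with hF
  set G : Lp ℝ 2 μ := hg.toLp g with hG
  have hFf : F =ᵐ[μ] f := hf.coeFn_toLp
  have hGg : G =ᵐ[μ] g := hg.coeFn_toLp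
  have hFG : ⟪F, G⟫ = ∫ x, f x * g x ∂μ := by
    rw [MeasureTheory.L2.inner_def]
    refine integral_congr_ae ?_
    filter_upwards [hFf, hGg] with x hx hy
    simp [hx, hy, RCLike.inner_apply, conj_trivial, mul_comm]
  have hFF : ‖F‖ = Real.sqrt (∫ x, f x ^ 2 ∂μ) := by
    have h1 : ⟪F, F⟫ = ∫ x, f x ^ 2 ∂μ := by
      rw [MeasureTheory.L2.inner_def]
      refine integral_congr_ae ?_
      filter_upwards [hFf] with x hx
      simp [hx, RCLike.inner_apply, conj_trivial, sq]
    rw [← Real.sqrt_sq (norm_nonneg F), ← real_inner_self_eq_norm_sq, h1]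
  have hGG : ‖G‖ = Real.sqrt (∫ x, g x ^ 2 ∂μ) := by
    have h1 : ⟪G, G⟫ = ∫ x, g x ^ 2 ∂μ := by
      rw [MeasureTheory.L2.inner_def]
      refine integral_congr_ae ?_
      filter_upwards [hGg] with x hx
      simp [hx, RCLike.inner_apply, conj_trivial, sq]
    rw [← Real.sqrt_sq (norm_nonneg G), ← real_inner_self_eq_norm_sq, h1]
  calc ∫ x, f x * g x ∂μ = ⟪F, G⟫ := hFG.symm
    _ ≤ ‖F‖ * ‖G‖ := real_inner_le_norm F G
    _ = _ := by rw [hFF, hGG]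

private lemma l2_integrable_mul {X : Type*} [MeasurableSpace X] {μ : Measure X} {f g : X → ℝ}
    (hf : MemLp f 2 μ) (hg : MemLp g 2 μ) :
    Integrable (fun x => f x * g x) μ := by
  have := MeasureTheory.L2.integrable_inner (𝕜 := ℝ) (hf.toLp f) (hg.toLp g)
  refine this.congr ?_
  filter_upwards [hf.coeFn_toLp, hg.coeFn_toLp] with x hx hy
  simp [hx, hy, RCLike.inner_apply, conj_trivial, mul_comm]

end Helpers

set_option maxHeartbeats 1000000 in
/-- For `u ∈ L²(a,b)` and `α, β ∈ ℝ`, for every `ε > 0` there is `M > 0`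
such that for every absolutely continuous `y : [a,b] → ℂ` with `y' ∈ L²(a,b)`:
`|∫ u y' ȳ| + |∫ u y ȳ'| + |α||y(a)|² + |β||y(b)|² ≤ ε ∫|y'|² + M ∫|y|²`. -/
theorem schrodinger_neumann_form_relative_bound
    (a b : ℝ) (hab : a < b) (u : ℝ → ℂ)
    (hu : MemLp u 2 (volume.restrict (Ioo a b))) (α β : ℝ) :
    ∀ ε > 0, ∃ M > 0, ∀ y y' : ℝ → ℂ,
      MemLp y' 2 (volume.restrict (Ioo a b)) →
      (∀ x ∈ Icc a b, y x = y a + ∫ t in a..x, y' t) →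
      ‖∫ x in a..b, u x * y' x * conj (y x)‖
          + ‖∫ x in a..b, u x * y x * conj (y' x)‖
          + |α| * ‖y a‖ ^ 2 + |β| * ‖y b‖ ^ 2 ≤
        ε * ∫ x in a..b, ‖y' x‖ ^ 2 + M * ∫ x in a..b, ‖y x‖ ^ 2 := by
  intro ε hε
  -- basic measure facts
  have hIoc : volume.restrict (Ioc a b) = volume.restrict (Ioo a b) :=
    Measure.restrict_congr_set (Ioo_ae_eq_Ioc (μ := volume) (a := a) (b := b)).symm
  have hIcc : volume.restrict (Icc a b) = volume.restrict (Ioo a b) :=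
    Measure.restrict_congr_set (Ioo_ae_eq_Icc (μ := volume) (a := a) (b := b)).symm
  -- constants
  set C : ℝ := Real.sqrt (∫ x in Ioo a b, ‖u x‖ ^ 2) with hC
  have hC0 : 0 ≤ C := Real.sqrt_nonneg _
  set lam : ℝ := ε / 4 with hlam
  have hlam0 : 0 < lam := by positivity
  set K : ℝ := C ^ 2 / lam + |α| + |β| + 1 with hK
  have hK0 : 0 < K := by positivity
  set h : ℝ := min (b - a) (lam / (2 * K)) with hh
  have hh0 : 0 < h := lt_min (by linarith) (by positivity)
  have hhba : h ≤ b - a := min_le_left _ _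
  have h2Kh : 2 * K * h ≤ lam := by
    have hmin : h ≤ lam / (2 * K) := min_le_right _ _
    calc 2 * K * h ≤ 2 * K * (lam / (2 * K)) :=
          mul_le_mul_of_nonneg_left hmin (by positivity)
      _ = lam := by field_simp
  clear_value C lam K h
  refine ⟨2 * K / h / (ε * (b - a)), by have hba : (0:ℝ) < b - a := sub_pos.mpr hab; positivity, ?_⟩
  intro y y' hy' hrep
  -- finite measure instance
  haveI hfin : IsFiniteMeasure (volume.restrict (Ioo a b)) := by
    constructor
    rw [Measure.restrict_apply_univ]
    simp [Real.volume_Ioo]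
  -- integrability of y'
  have hy'int : IntegrableOn y' (Ioo a b) volume :=
    (hy'.mono_exponent (by norm_num)).integrable le_rfl
  have hy'Icc : IntegrableOn y' (Icc a b) volume := by
    rw [IntegrableOn, hIcc]; exact hy'int
  have hy'ii : ∀ p ∈ Icc a b, ∀ q ∈ Icc a b, IntervalIntegrable y' volume p q := by
    intro p hp q hq
    exact (hy'Icc.mono_set (uIcc_subset_Icc hp hq)).intervalIntegrable
  -- continuity of y on [a,b]
  have hycont : ContinuousOn y (Icc a b) := by
    have hint : IntervalIntegrable y' volume a b :=
      hy'ii a (left_mem_Icc.2 hab.le) b (right_mem_Icc.2 hab.le)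
    have := intervalIntegral.continuousOn_primitive_interval' hint (left_mem_uIcc (a := a) (b := b))
    rw [uIcc_of_le hab.le] at this
    exact (continuousOn_const.add this).congr hrep
  -- integrability of squares
  have hysq : IntegrableOn (fun t => ‖y t‖ ^ 2) (Icc a b) volume :=
    (hycont.norm.pow 2).integrableOn_compact isCompact_Icc
  have hy'sq : IntegrableOn (fun t => ‖y' t‖ ^ 2) (Icc a b) volume := by
    rw [IntegrableOn, hIcc]
    exact (l2_integrable_mul hy'.norm hy'.norm).congr
      (Filter.Eventually.of_forall fun x => (pow_two ‖y' x‖).symm)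
  -- main quantities
  set D : ℝ := ∫ x in Ioo a b, ‖y' x‖ ^ 2 with hD
  set N : ℝ := ∫ x in Ioo a b, ‖y x‖ ^ 2 with hN
  have hD0 : 0 ≤ D := integral_nonneg fun x => by positivity
  have hN0 : 0 ≤ N := integral_nonneg fun x => by positivity
  set S : ℝ := 2 * h * D + 2 / h * N with hS
  have hS0 : 0 ≤ S := by positivity
  clear_value D N S
  have hy'sqD : ∫ x in Icc a b, ‖y' x‖ ^ 2 = D := by rw [hD, hIcc]
  have hysqN : ∫ x in Icc a b, ‖y x‖ ^ 2 = N := by rw [hN, hIcc]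
  -- KEY pointwise bound
  have key : ∀ x ∈ Icc a b, ‖y x‖ ^ 2 ≤ S := by
    intro x hx
    set c : ℝ := min x (b - h) with hc
    have hac : a ≤ c := le_min hx.1 (by linarith)
    have hcx : c ≤ x := min_le_left _ _
    have hxch : x ≤ c + h := by
      rcases le_total x (b - h) with h1 | h1
      · rw [hc, min_eq_left h1]; linarith
      · rw [hc, min_eq_right h1]; linarith [hx.2]
    have hchb : c + h ≤ b := by
      have := min_le_right x (b - h); linarith
    clear_value c
    have hJsub : Icc c (c + h) ⊆ Icc a b := Icc_subset_Icc hac hchb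
    have hJsub' : Ioc c (c + h) ⊆ Icc a b := Ioc_subset_Icc_self.trans hJsub
    have hJvol : (volume (Ioc c (c + h))).toReal = h := by
      rw [Real.volume_Ioc]
      rw [ENNReal.toReal_ofReal (by linarith)]
      ring
    -- step 1: pointwise in t
    have step1 : ∀ t ∈ Icc c (c + h), ‖y x‖ ^ 2 ≤ 2 * ‖y t‖ ^ 2 + 2 * h * D := by
      intro t ht
      have htab : t ∈ Icc a b := hJsub ht
      have hsub : y x - y t = ∫ s in t..x, y' s := by
        rw [hrep x hx, hrep t htab]
        rw [← intervalIntegral.integral_interval_sub_left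
          (hy'ii a (left_mem_Icc.2 hab.le) x hx) (hy'ii a (left_mem_Icc.2 hab.le) t htab)]
        ring
      have hbound : ‖∫ s in t..x, y' s‖ ≤ Real.sqrt D * Real.sqrt h := by
        have hIb : ∫ s in uIoc t x, ‖y' s‖ ≤ ∫ s in Ioc c (c + h), ‖y' s‖ := by
          have hy'nIcc : IntegrableOn (fun s => ‖y' s‖) (Icc a b) volume := hy'Icc.norm
          refine setIntegral_mono_set (hy'nIcc.mono_set hJsub')
            (Filter.Eventually.of_forall fun s => norm_nonneg _) ?_
          refine HasSubset.Subset.eventuallyLE ?_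
          show Ioc (min t x) (max t x) ⊆ _
          exact Ioc_subset_Ioc (le_min ht.1 hcx) (max_le ht.2 hxch)
        have hcs : ∫ s in Ioc c (c + h), ‖y' s‖ ≤ Real.sqrt D * Real.sqrt h := by
          have hmle : volume.restrict (Ioc c (c + h)) ≤ volume.restrict (Ioo a b) := by
            rw [← hIcc]
            exact Measure.restrict_mono hJsub' le_rfl
          have h1 : MemLp (fun s => ‖y' s‖) 2 (volume.restrict (Ioc c (c + h))) :=
            hy'.norm.mono_measure hmle
          have h2 : MemLp (fun _ : ℝ => (1 : ℝ)) 2 (volume.restrict (Ioc c (c + h))) :=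
            memLp_const 1
          have h3 := cs_integral h1 h2
          simp only [mul_one, one_pow] at h3
          have h4 : ∫ s in Ioc c (c + h), ‖y' s‖ ^ 2 ≤ D := by
            rw [← hy'sqD]
            exact setIntegral_mono_set hy'sq
              (Filter.Eventually.of_forall fun s => by positivity)
              (HasSubset.Subset.eventuallyLE hJsub')
          have h5 : ∫ _ in Ioc c (c + h), (1 : ℝ) = h := by
            rw [setIntegral_const, measureReal_def, hJvol, smul_eq_mul, mul_one]
          calc ∫ s in Ioc c (c + h), ‖y' s‖
              ≤ Real.sqrt (∫ s in Ioc c (c + h), ‖y' s‖ ^ 2)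
                  * Real.sqrt (∫ _ in Ioc c (c + h), (1 : ℝ)) := h3
            _ = Real.sqrt (∫ s in Ioc c (c + h), ‖y' s‖ ^ 2) * Real.sqrt h := by rw [h5]
            _ ≤ Real.sqrt D * Real.sqrt h :=
                mul_le_mul_of_nonneg_right (Real.sqrt_le_sqrt h4) (Real.sqrt_nonneg _)
        calc ‖∫ s in t..x, y' s‖ ≤ ∫ s in uIoc t x, ‖y' s‖ :=
              intervalIntegral.norm_integral_le_integral_norm_uIoc
          _ ≤ ∫ s in Ioc c (c + h), ‖y' s‖ := hIb
          _ ≤ Real.sqrt D * Real.sqrt h := hcs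
      have htri : ‖y x‖ ≤ ‖y t‖ + Real.sqrt D * Real.sqrt h := by
        calc ‖y x‖ = ‖y t + (y x - y t)‖ := by
              rw [show y t + (y x - y t) = y x from by ring]
          _ ≤ ‖y t‖ + ‖y x - y t‖ := norm_add_le _ _
          _ ≤ ‖y t‖ + Real.sqrt D * Real.sqrt h := by rw [hsub]; linarith [hbound]
      nlinarith [sq_nonneg (‖y t‖ - Real.sqrt D * Real.sqrt h), htri,
        mul_nonneg (Real.sqrt_nonneg D) (Real.sqrt_nonneg h), Real.sq_sqrt hD0,
        Real.sq_sqrt hh0.le, norm_nonneg (y x), norm_nonneg (y t)]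
    -- step 2: integrate over t
    have hconst : IntegrableOn (fun _ : ℝ => ‖y x‖ ^ 2) (Ioc c (c + h)) volume := by
      exact integrableOn_const (by rw [Real.volume_Ioc]; exact ENNReal.ofReal_ne_top)
    have hrhs : IntegrableOn (fun t => 2 * ‖y t‖ ^ 2 + 2 * h * D) (Ioc c (c + h)) volume := by
      refine Integrable.add ((hysq.mono_set hJsub').const_mul 2) ?_
      exact integrableOn_const (by rw [Real.volume_Ioc]; exact ENNReal.ofReal_ne_top)
    have int1 : h * ‖y x‖ ^ 2 ≤ 2 * N + 2 * h ^ 2 * D := by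
      have hmono := setIntegral_mono_on hconst hrhs measurableSet_Ioc
        (fun t ht => step1 t (Ioc_subset_Icc_self ht))
      rw [setIntegral_const, measureReal_def, hJvol, smul_eq_mul] at hmono
      have hsplit : ∫ t in Ioc c (c + h), (2 * ‖y t‖ ^ 2 + 2 * h * D) =
          2 * (∫ t in Ioc c (c + h), ‖y t‖ ^ 2) + (2 * h * D) * h := by
        rw [integral_add ((hysq.mono_set hJsub').const_mul 2) (by
          exact integrableOn_const (by rw [Real.volume_Ioc]; exact ENNReal.ofReal_ne_top))]
        rw [integral_const_mul, setIntegral_const, measureReal_def, hJvol, smul_eq_mul]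
        ring
      have hJN : ∫ t in Ioc c (c + h), ‖y t‖ ^ 2 ≤ N := by
        rw [← hysqN]
        exact setIntegral_mono_set hysq
          (Filter.Eventually.of_forall fun s => by positivity)
          (HasSubset.Subset.eventuallyLE hJsub')
      rw [hsplit] at hmono
      nlinarith [hmono, hJN, hh0, hD0]
    have hfe : h * (2 / h) = 2 := by field_simp
    rw [hS]
    nlinarith [int1, hh0, hD0, hN0, hfe]
  -- sqrt S bound on y
  have ykey : ∀ x ∈ Icc a b, ‖y x‖ ≤ Real.sqrt S := by
    intro x hx
    have := Real.sqrt_le_sqrt (key x hx)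
    rwa [Real.sqrt_sq (norm_nonneg _)] at this
  -- Hölder for ∫ ‖u‖‖y'‖
  have hcs2 : ∫ x in Ioo a b, ‖u x‖ * ‖y' x‖ ≤ C * Real.sqrt D := by
    have := cs_integral hu.norm hy'.norm
    rw [hC, hD]
    exact this
  have hint_uy' : Integrable (fun x => ‖u x‖ * ‖y' x‖) (volume.restrict (Ioo a b)) :=
    l2_integrable_mul hu.norm hy'.norm
  -- first term
  have hT1 : ‖∫ x in a..b, u x * y' x * conj (y x)‖ ≤ Real.sqrt S * (C * Real.sqrt D) := by
    rw [intervalIntegral.integral_of_le hab.le, hIoc]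
    calc ‖∫ x in Ioo a b, u x * y' x * conj (y x)‖
        ≤ ∫ x in Ioo a b, ‖u x * y' x * conj (y x)‖ := norm_integral_le_integral_norm _
      _ ≤ ∫ x in Ioo a b, Real.sqrt S * (‖u x‖ * ‖y' x‖) := by
          refine integral_mono_of_nonneg (Filter.Eventually.of_forall fun x => norm_nonneg _)
            (hint_uy'.const_mul _) ?_
          filter_upwards [ae_restrict_mem measurableSet_Ioo] with x hx
          have h1 : ‖y x‖ ≤ Real.sqrt S := ykey x (Ioo_subset_Icc_self hx)
          calc ‖u x * y' x * conj (y x)‖ = ‖u x‖ * ‖y' x‖ * ‖y x‖ := by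
                simp [norm_mul, RCLike.norm_conj]
            _ ≤ ‖u x‖ * ‖y' x‖ * Real.sqrt S :=
                mul_le_mul_of_nonneg_left h1 (by positivity)
            _ = Real.sqrt S * (‖u x‖ * ‖y' x‖) := by ring
      _ = Real.sqrt S * ∫ x in Ioo a b, ‖u x‖ * ‖y' x‖ := integral_const_mul _ _
      _ ≤ Real.sqrt S * (C * Real.sqrt D) :=
          mul_le_mul_of_nonneg_left hcs2 (Real.sqrt_nonneg _)
  -- second term
  have hT2 : ‖∫ x in a..b, u x * y x * conj (y' x)‖ ≤ Real.sqrt S * (C * Real.sqrt D) := by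
    rw [intervalIntegral.integral_of_le hab.le, hIoc]
    calc ‖∫ x in Ioo a b, u x * y x * conj (y' x)‖
        ≤ ∫ x in Ioo a b, ‖u x * y x * conj (y' x)‖ := norm_integral_le_integral_norm _
      _ ≤ ∫ x in Ioo a b, Real.sqrt S * (‖u x‖ * ‖y' x‖) := by
          refine integral_mono_of_nonneg (Filter.Eventually.of_forall fun x => norm_nonneg _)
            (hint_uy'.const_mul _) ?_
          filter_upwards [ae_restrict_mem measurableSet_Ioo] with x hx
          have h1 : ‖y x‖ ≤ Real.sqrt S := ykey x (Ioo_subset_Icc_self hx)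
          calc ‖u x * y x * conj (y' x)‖ = ‖u x‖ * ‖y x‖ * ‖y' x‖ := by
                simp [norm_mul, RCLike.norm_conj]
            _ ≤ Real.sqrt S * (‖u x‖ * ‖y' x‖) := by
                nlinarith [norm_nonneg (u x), norm_nonneg (y' x), norm_nonneg (y x),
                  Real.sqrt_nonneg S, mul_nonneg (norm_nonneg (u x)) (norm_nonneg (y' x))]
      _ = Real.sqrt S * ∫ x in Ioo a b, ‖u x‖ * ‖y' x‖ := integral_const_mul _ _
      _ ≤ Real.sqrt S * (C * Real.sqrt D) :=
          mul_le_mul_of_nonneg_left hcs2 (Real.sqrt_nonneg _)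
  -- boundary terms
  have hBa : |α| * ‖y a‖ ^ 2 ≤ |α| * S :=
    mul_le_mul_of_nonneg_left (key a (left_mem_Icc.2 hab.le)) (abs_nonneg _)
  have hBb : |β| * ‖y b‖ ^ 2 ≤ |β| * S :=
    mul_le_mul_of_nonneg_left (key b (right_mem_Icc.2 hab.le)) (abs_nonneg _)
  -- Young's inequality
  have young : Real.sqrt S * (C * Real.sqrt D) + Real.sqrt S * (C * Real.sqrt D) ≤
      lam * D + C ^ 2 / lam * S := by
    have e1 : Real.sqrt S ^ 2 = S := Real.sq_sqrt hS0
    have e2 : Real.sqrt D ^ 2 = D := Real.sq_sqrt hD0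
    have e3 : C ^ 2 / lam * lam = C ^ 2 := div_mul_cancel₀ _ hlam0.ne'
    nlinarith [sq_nonneg (lam * Real.sqrt D - C * Real.sqrt S), Real.sqrt_nonneg D,
      Real.sqrt_nonneg S, hlam0, sq_nonneg C, e1, e2, e3, mul_pos hlam0 hlam0]
  -- combine
  have hKS : C ^ 2 / lam * S + |α| * S + |β| * S ≤ K * S := by
    have hKge : C ^ 2 / lam + |α| + |β| ≤ K := by rw [hK]; linarith
    nlinarith [hS0, hKge]
  have hSfin : K * S ≤ lam * D + 2 * K / h * N := by
    rw [hS]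
    have e : K * (2 * h * D + 2 / h * N) = (2 * K * h) * D + (2 * K / h) * N := by ring
    have e2 := mul_le_mul_of_nonneg_right h2Kh hD0
    linarith
  -- rewrite the RHS integrals
  have hDeq : ∫ x in a..b, ‖y' x‖ ^ 2 = D := by
    rw [intervalIntegral.integral_of_le hab.le, hIoc, hD]
  have hNeq : ∫ x in a..b, ‖y x‖ ^ 2 = N := by
    rw [intervalIntegral.integral_of_le hab.le, hIoc, hN]
  have hy'sqII : IntervalIntegrable (fun x => ‖y' x‖ ^ 2) volume a b :=
    (hy'sq.mono_set (uIcc_of_le hab.le).subset).intervalIntegrable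
  have hArith : ε * (D + (b - a) * (2 * K / h / (ε * (b - a)) * N)) =
      ε * D + 2 * K / h * N := by
    have hba : b - a ≠ 0 := ne_of_gt (by linarith)
    field_simp
  rw [hNeq, intervalIntegral.integral_add hy'sqII intervalIntegrable_const,
    intervalIntegral.integral_const, smul_eq_mul, hDeq, hArith]
  have final : Real.sqrt S * (C * Real.sqrt D) + Real.sqrt S * (C * Real.sqrt D)
      + |α| * S + |β| * S ≤ ε * D + 2 * K / h * N := by
    have : lam * D + lam * D ≤ (ε / 2) * D := by rw [hlam]; ring_nf; linarith [hD0]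
    have hltot : lam * D + (C ^ 2 / lam * S + |α| * S + |β| * S) ≤ lam * D + K * S :=
      by linarith [hKS]
    calc Real.sqrt S * (C * Real.sqrt D) + Real.sqrt S * (C * Real.sqrt D)
          + |α| * S + |β| * S
        ≤ lam * D + C ^ 2 / lam * S + |α| * S + |β| * S := by linarith [young]
      _ ≤ lam * D + K * S := by linarith [hKS]
      _ ≤ lam * D + (lam * D + 2 * K / h * N) := by linarith [hSfin]
      _ ≤ ε * D + 2 * K / h * N := by
          have : 2 * lam ≤ ε := by rw [hlam]; linarith
          nlinarith [hD0]
  linarith [hT1, hT2, hBa, hBb, final]
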